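/- Let m, n ≥ 1 and let μ_1, μ_2 be any two Miura-locally-valid MV assignments of the m×n Miura-ori. Then there is a finite sequence of single face flips transforming μ_1 into μ_2 in which every intermediate MV assignment is Miura-locally-valid; that is, the origami flip graph of the m×n Miura-ori is connected. -/

import Mathlib

/-- A crease edge of the `m × n` square grid crease pattern: a vertical crease
`V i j` between faces `(i,j)` and `(i+1,j)`, or a horizontal crease `H i j`
between faces `(i,j)` and `(i,j+1)`. -/
inductive Crease (m n : ℕ) : Type where
  | V : (i j : ℕ) → i + 1 < m → j < n → Crease m n
  | H : (i j : ℕ) → i < m → j + 1 < n → Crease m n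

/-- The face `F` borders the crease `e`. -/
def Borders {m n : ℕ} (F : ℕ × ℕ) : Crease m n → Prop
  | .V i j _ _ => F = (i, j) ∨ F = (i + 1, j)
  | .H i j _ _ => F = (i, j) ∨ F = (i, j + 1)

instance {m n : ℕ} (F : ℕ × ℕ) (e : Crease m n) : Decidable (Borders F e) :=
  match e with
  | .V i j _ _ => inferInstanceAs (Decidable (F = (i, j) ∨ F = (i + 1, j)))
  | .H i j _ _ => inferInstanceAs (Decidable (F = (i, j) ∨ F = (i, j + 1)))

/-- A mountain-valley assignment takes values in `{-1, 1}`. -/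
def IsMV {m n : ℕ} (μ : Crease m n → ℤ) : Prop :=
  ∀ e, μ e = 1 ∨ μ e = -1

/-- Local validity: at every interior vertex `(a+1, b+1)` the sum of `μ` over the four
incident crease edges is `2` or `-2`. -/
def LocallyValid {m n : ℕ} (μ : Crease m n → ℤ) : Prop :=
  ∀ a b : ℕ, ∀ ha : a + 1 < m, ∀ hb : b + 1 < n,
    μ (.V a b ha (by omega)) + μ (.V a (b + 1) ha hb) +
      μ (.H a b (by omega) hb) + μ (.H (a + 1) b ha hb) = 2 ∨
    μ (.V a b ha (by omega)) + μ (.V a (b + 1) ha hb) +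
      μ (.H a b (by omega) hb) + μ (.H (a + 1) b ha hb) = -2

/-- The face faceFlip of `μ` at the face `F`. -/
def faceFlip {m n : ℕ} (μ : Crease m n → ℤ) (F : ℕ × ℕ) (e : Crease m n) : ℤ :=
  if Borders F e then -μ e else μ e

/-- The faces of the `m × n` square grid. -/
def Faces (m n : ℕ) : Finset (ℕ × ℕ) := Finset.range m ×ˢ Finset.range n

/-- One of the two faces bordering a crease. -/
def faceA {m n : ℕ} : Crease m n → ℕ × ℕ
  | .V i j _ _ => (i, j)
  | .H i j _ _ => (i, j)

/-- The other face bordering a crease. -/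
def faceB {m n : ℕ} : Crease m n → ℕ × ℕ
  | .V i j _ _ => (i + 1, j)
  | .H i j _ _ => (i, j + 1)

/-- Miura local validity at every interior vertex `v = (a+1, b+1)`:
(a) the sum of `μ` over the four incident creases is `2` or `-2`, and
(b) the values of `μ` on `V (a,b)`, `V (a,b+1)` and the near horizontal crease
(`H (a,b)` if the row index `b+1` is even, `H (a+1,b)` if it is odd) are not all equal. -/
def MiuraLocallyValid {m n : ℕ} (μ : Crease m n → ℤ) : Prop :=
  ∀ a b : ℕ, ∀ ha : a + 1 < m, ∀ hb : b + 1 < n,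
    (μ (.V a b ha (by omega)) + μ (.V a (b + 1) ha hb) +
        μ (.H a b (by omega) hb) + μ (.H (a + 1) b ha hb) = 2 ∨
      μ (.V a b ha (by omega)) + μ (.V a (b + 1) ha hb) +
        μ (.H a b (by omega) hb) + μ (.H (a + 1) b ha hb) = -2) ∧
    ¬ (μ (.V a b ha (by omega)) = μ (.V a (b + 1) ha hb) ∧
        μ (.V a (b + 1) ha hb) =
          μ (if (b + 1) % 2 = 0 then Crease.H a b (by omega) hb
             else Crease.H (a + 1) b ha hb))

/-- `c` is the coloring of the faces by `ℤ/3ℤ` associated to the MV assignment `μ`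
of the Miura-ori: `c (0,0) = 0`; within row `j`, `c (i+1,j) = c (i,j) ± μ (V i j)`
with sign `+` for even `j` and `-` for odd `j`; and between rows,
`c (m-1, j+1) = c (m-1, j) + μ (H (m-1) j)` for even `j` and
`c (0, j+1) = c (0, j) + μ (H 0 j)` for odd `j`. -/
def IsAssocColoring (m n : ℕ) (hm : 1 ≤ m) (μ : Crease m n → ℤ)
    (c : ℕ × ℕ → ZMod 3) : Prop :=
  c (0, 0) = 0 ∧
  (∀ i j : ℕ, ∀ hi : i + 1 < m, ∀ hj : j < n,
    c (i + 1, j) = c (i, j) +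
      (if j % 2 = 0 then ((μ (.V i j hi hj) : ℤ) : ZMod 3)
       else -((μ (.V i j hi hj) : ℤ) : ZMod 3))) ∧
  (∀ j : ℕ, ∀ hj : j + 1 < n, j % 2 = 0 →
    c (m - 1, j + 1) = c (m - 1, j) + ((μ (.H (m - 1) j (by omega) hj) : ℤ) : ZMod 3)) ∧
  (∀ j : ℕ, ∀ hj : j + 1 < n, j % 2 = 1 →
    c (0, j + 1) = c (0, j) + ((μ (.H 0 j (by omega) hj) : ℤ) : ZMod 3))

/-- Applying the face flips of a list of faces in succession, starting from `μ`. -/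
def flipSeq {m n : ℕ} (μ : Crease m n → ℤ) (L : List (ℕ × ℕ)) : Crease m n → ℤ :=
  L.foldl (fun ν F => faceFlip ν F) μ

section Aux

variable {m n : ℕ}

/-- The MV assignment induced by a height function. -/
def toMV (m n : ℕ) (h : ℕ × ℕ → ℤ) : Crease m n → ℤ
  | .V i j _ _ => if j % 2 = 0 then h (i+1, j) - h (i, j) else h (i, j) - h (i+1, j)
  | .H i j _ _ => h (i, j+1) - h (i, j)

/-- A height function: adjacent faces differ by exactly 1. -/
def IsHF (m n : ℕ) (h : ℕ × ℕ → ℤ) : Prop :=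
  (∀ i j : ℕ, i + 1 < m → j < n → h (i+1,j) - h (i,j) = 1 ∨ h (i+1,j) - h (i,j) = -1) ∧
  (∀ i j : ℕ, i < m → j + 1 < n → h (i,j+1) - h (i,j) = 1 ∨ h (i,j+1) - h (i,j) = -1)

/-- Reachability in the origami flip graph. -/
def Reach (m n : ℕ) (μ ν : Crease m n → ℤ) : Prop :=
  ∃ L : List (ℕ × ℕ), (∀ F ∈ L, F ∈ Faces m n) ∧ flipSeq μ L = ν ∧
    ∀ k ≤ L.length, IsMV (flipSeq μ (L.take k)) ∧ MiuraLocallyValid (flipSeq μ (L.take k))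

lemma toMV_isMV (h : ℕ × ℕ → ℤ) (hh : IsHF m n h) : IsMV (toMV m n h) := by
  intro e
  cases e with
  | V i j hi hj =>
    have := hh.1 i j hi hj
    simp only [toMV]
    split <;> omega
  | H i j hi hj =>
    have := hh.2 i j hi hj
    simp only [toMV]
    omega

lemma toMV_valid (h : ℕ × ℕ → ℤ) (hh : IsHF m n h) : MiuraLocallyValid (toMV m n h) := by
  intro a b ha hb
  have hd1 := hh.1 a b ha (by omega)
  have hd2 := hh.1 a (b+1) ha hb
  have hd3 := hh.2 a b (by omega) hb
  have hd4 := hh.2 (a+1) b ha hb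
  by_cases hb2 : (b + 1) % 2 = 0
  · rw [if_pos hb2]
    have hbo : b % 2 = 1 := by omega
    simp only [toMV, hbo]
    norm_num
    omega
  · rw [if_neg hb2]
    have hbe : b % 2 = 0 := by omega
    simp only [toMV, hbe]
    norm_num
    omega

/-- Validity at a vertex is equivalent to the integer relation. -/
lemma valid_rel (μ : Crease m n → ℤ) (hmv : IsMV μ) (hval : MiuraLocallyValid μ)
    (a b : ℕ) (ha : a + 1 < m) (hb : b + 1 < n) :
    μ (.H (a+1) b ha hb) - μ (.H a b (by omega) hb) =
      (if b % 2 = 0 then -(μ (.V a b ha (by omega)) + μ (.V a (b+1) ha hb))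
       else μ (.V a b ha (by omega)) + μ (.V a (b+1) ha hb)) := by
  have h1 := hmv (.V a b ha (by omega))
  have h2 := hmv (.V a (b+1) ha hb)
  have h3 := hmv (.H a b (by omega) hb)
  have h4 := hmv (.H (a+1) b ha hb)
  obtain ⟨hsum, hne⟩ := hval a b ha hb
  by_cases hbe : b % 2 = 0
  · rw [if_pos hbe]
    have hb2 : ¬ ((b + 1) % 2 = 0) := by omega
    rw [if_neg hb2] at hne
    omega
  · rw [if_neg hbe]
    have hb2 : (b + 1) % 2 = 0 := by omega
    rw [if_pos hb2] at hne
    omega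

end Aux
section Aux2

variable {m n : ℕ}

def vS (m n : ℕ) (μ : Crease m n → ℤ) (i j : ℕ) : ℤ :=
  if h : i + 1 < m ∧ j < n then μ (.V i j h.1 h.2) else 0

def hS (m n : ℕ) (μ : Crease m n → ℤ) (i j : ℕ) : ℤ :=
  if h : i < m ∧ j + 1 < n then μ (.H i j h.1 h.2) else 0

def hgt (m n : ℕ) (μ : Crease m n → ℤ) : ℕ × ℕ → ℤ :=
  fun p => (∑ k ∈ Finset.range p.1, vS m n μ k 0) + ∑ l ∈ Finset.range p.2, hS m n μ p.1 l

lemma hgt_vert (μ : Crease m n → ℤ) (i j : ℕ) (hi : i < m) (hj : j + 1 < n) :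
    hgt m n μ (i, j+1) - hgt m n μ (i, j) = μ (.H i j hi hj) := by
  simp only [hgt, Finset.sum_range_succ]
  have : hS m n μ i j = μ (.H i j hi hj) := by
    rw [hS, dif_pos ⟨hi, hj⟩]
  omega

lemma hgt_hor (μ : Crease m n → ℤ) (hmv : IsMV μ) (hval : MiuraLocallyValid μ) :
    ∀ (j : ℕ) (hj : j < n) (i : ℕ) (hi : i + 1 < m),
    hgt m n μ (i+1, j) - hgt m n μ (i, j) =
      (if j % 2 = 0 then μ (.V i j hi hj) else -(μ (.V i j hi hj))) := by
  intro j
  induction j with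
  | zero =>
    intro hj i hi
    have : vS m n μ i 0 = μ (.V i 0 hi hj) := by rw [vS, dif_pos ⟨hi, hj⟩]
    simp only [hgt, Finset.sum_range_succ, Finset.sum_range_zero, Nat.zero_mod, if_pos]
    omega
  | succ j ih =>
    intro hj i hi
    have hjn : j < n := by omega
    have hIH := ih hjn i hi
    have hv := hgt_vert μ i j (by omega) hj
    have hv' := hgt_vert μ (i+1) j (by omega) hj
    have hrel := valid_rel μ hmv hval i j hi hj
    by_cases hje : j % 2 = 0
    · rw [if_pos hje] at hIH hrel
      rw [if_neg (by omega : ¬ ((j+1) % 2 = 0))]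
      omega
    · rw [if_neg hje] at hIH hrel
      rw [if_pos (by omega : (j+1) % 2 = 0)]
      omega

lemma exists_height (μ : Crease m n → ℤ) (hmv : IsMV μ) (hval : MiuraLocallyValid μ) :
    ∃ h : ℕ × ℕ → ℤ, IsHF m n h ∧ toMV m n h = μ := by
  refine ⟨hgt m n μ, ⟨?_, ?_⟩, ?_⟩
  · intro i j hi hj
    have := hgt_hor μ hmv hval j hj i hi
    have := hmv (.V i j hi hj)
    split at * <;> omega
  · intro i j hi hj
    have := hgt_vert μ i j hi hj
    have := hmv (.H i j hi hj)
    omega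
  · funext e
    cases e with
    | V i j hi hj =>
      have := hgt_hor μ hmv hval j hj i hi
      simp only [toMV]
      split at * <;> omega
    | H i j hi hj =>
      have := hgt_vert μ i j hi hj
      simp only [toMV]
      omega

end Aux2
section Aux3

variable {m n : ℕ}

lemma flip_toMV (h : ℕ × ℕ → ℤ) (i j : ℕ) (e : ℤ)
    (hu : i + 1 < m → j < n → h (i+1, j) = h (i, j) + e)
    (hd : ∀ i', i' + 1 = i → i < m → j < n → h (i', j) = h (i, j) + e)
    (hr : i < m → j + 1 < n → h (i, j+1) = h (i, j) + e)
    (hl : ∀ j', j' + 1 = j → i < m → j < n → h (i, j') = h (i, j) + e) :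
    toMV m n (Function.update h (i, j) (h (i, j) + 2*e)) = faceFlip (toMV m n h) (i, j) := by
  funext c
  cases c with
  | V a b pa pb =>
    simp only [toMV, faceFlip, Function.update_apply]
    by_cases h1 : ((a : ℕ), b) = (i, j)
    · have h1' : a = i ∧ b = j := by simpa [Prod.mk.injEq] using h1
      obtain ⟨rfl, rfl⟩ : a = i ∧ b = j := h1'
      have h2 : ¬ (((a+1 : ℕ), b) = (a, b)) := by simp
      have key : h (a+1, b) = h (a, b) + e := hu pa pb
      have hB : Borders (a, b) (Crease.V a b pa pb) := Or.inl rfl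
      rw [if_pos h1, if_neg h2, if_pos hB]
      by_cases hb2 : b % 2 = 0
      · rw [if_pos hb2, if_pos hb2]; omega
      · rw [if_neg hb2, if_neg hb2]; omega
    · by_cases h2 : ((a + 1 : ℕ), b) = (i, j)
      · have h2' : a + 1 = i ∧ b = j := by simpa [Prod.mk.injEq] using h2
        have key : h (a, b) = h (i, j) + e := by
          have := hd a h2'.1 (by omega) (by omega)
          rw [h2'.2]; exact this
        have hij : h (i, j) = h (a + 1, b) := by rw [← h2]
        have hB : Borders (i, j) (Crease.V a b pa pb) := Or.inr h2.symm
        rw [if_pos h2, if_neg h1, if_pos hB]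
        rw [hij] at key ⊢
        by_cases hb2 : b % 2 = 0
        · rw [if_pos hb2, if_pos hb2]; omega
        · rw [if_neg hb2, if_neg hb2]; omega
      · have hB : ¬ Borders (i, j) (Crease.V a b pa pb) := by
          simp only [Borders]
          push_neg
          exact ⟨fun hc => h1 hc.symm, fun hc => h2 hc.symm⟩
        rw [if_neg h1, if_neg h2, if_neg hB]
  | H a b pa pb =>
    simp only [toMV, faceFlip, Function.update_apply]
    by_cases h1 : ((a : ℕ), b) = (i, j)
    · have h1' : a = i ∧ b = j := by simpa [Prod.mk.injEq] using h1
      obtain ⟨rfl, rfl⟩ : a = i ∧ b = j := h1'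
      have h2 : ¬ (((a : ℕ), b + 1) = (a, b)) := by simp
      have key : h (a, b+1) = h (a, b) + e := hr pa pb
      have hB : Borders (a, b) (Crease.H a b pa pb) := Or.inl rfl
      rw [if_pos h1, if_neg h2, if_pos hB]
      omega
    · by_cases h2 : ((a : ℕ), b + 1) = (i, j)
      · have h2' : a = i ∧ b + 1 = j := by simpa [Prod.mk.injEq] using h2
        have key : h (a, b) = h (i, j) + e := by
          have := hl b h2'.2 (by omega) (by omega)
          rw [h2'.1]; exact this
        have hij : h (i, j) = h (a, b + 1) := by rw [← h2]
        have hB : Borders (i, j) (Crease.H a b pa pb) := Or.inr h2.symm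
        rw [if_pos h2, if_neg h1, if_pos hB]
        rw [hij] at key ⊢
        omega
      · have hB : ¬ Borders (i, j) (Crease.H a b pa pb) := by
          simp only [Borders]
          push_neg
          exact ⟨fun hc => h1 hc.symm, fun hc => h2 hc.symm⟩
        rw [if_neg h1, if_neg h2, if_neg hB]

lemma flip_HF (h : ℕ × ℕ → ℤ) (hh : IsHF m n h) (i j : ℕ) (e : ℤ) (he : e = 1 ∨ e = -1)
    (hu : i + 1 < m → j < n → h (i+1, j) = h (i, j) + e)
    (hd : ∀ i', i' + 1 = i → i < m → j < n → h (i', j) = h (i, j) + e)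
    (hr : i < m → j + 1 < n → h (i, j+1) = h (i, j) + e)
    (hl : ∀ j', j' + 1 = j → i < m → j < n → h (i, j') = h (i, j) + e) :
    IsHF m n (Function.update h (i, j) (h (i, j) + 2*e)) := by
  constructor
  · intro a b pa pb
    simp only [Function.update_apply]
    by_cases h1 : ((a : ℕ), b) = (i, j)
    · have h1' : a = i ∧ b = j := by simpa [Prod.mk.injEq] using h1
      obtain ⟨rfl, rfl⟩ := h1'
      have h2 : ¬ (((a+1 : ℕ), b) = (a, b)) := by simp
      have key : h (a+1, b) = h (a, b) + e := hu pa pb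
      rw [if_pos h1, if_neg h2]
      omega
    · by_cases h2 : ((a + 1 : ℕ), b) = (i, j)
      · have h2' : a + 1 = i ∧ b = j := by simpa [Prod.mk.injEq] using h2
        have key : h (a, b) = h (i, j) + e := by
          have := hd a h2'.1 (by omega) (by omega)
          rw [h2'.2]; exact this
        have hij : h (i, j) = h (a + 1, b) := by rw [← h2]
        rw [if_pos h2, if_neg h1, hij]
        rw [hij] at key
        omega
      · rw [if_neg h1, if_neg h2]
        exact hh.1 a b pa pb
  · intro a b pa pb
    simp only [Function.update_apply]
    by_cases h1 : ((a : ℕ), b) = (i, j)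
    · have h1' : a = i ∧ b = j := by simpa [Prod.mk.injEq] using h1
      obtain ⟨rfl, rfl⟩ := h1'
      have h2 : ¬ (((a : ℕ), b + 1) = (a, b)) := by simp
      have key : h (a, b+1) = h (a, b) + e := hr pa pb
      rw [if_pos h1, if_neg h2]
      omega
    · by_cases h2 : ((a : ℕ), b + 1) = (i, j)
      · have h2' : a = i ∧ b + 1 = j := by simpa [Prod.mk.injEq] using h2
        have key : h (a, b) = h (i, j) + e := by
          have := hl b h2'.2 (by omega) (by omega)
          rw [h2'.1]; exact this
        have hij : h (i, j) = h (a, b + 1) := by rw [← h2]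
        rw [if_pos h2, if_neg h1, hij]
        rw [hij] at key
        omega
      · rw [if_neg h1, if_neg h2]
        exact hh.2 a b pa pb

end Aux3
section Aux4

variable {m n : ℕ}

lemma flipSeq_nil (μ : Crease m n → ℤ) : flipSeq μ [] = μ := rfl

lemma reach_refl (μ : Crease m n → ℤ) (h1 : IsMV μ) (h2 : MiuraLocallyValid μ) :
    Reach m n μ μ := by
  refine ⟨[], by simp, rfl, ?_⟩
  intro k hk
  rw [List.take_nil]
  exact ⟨h1, h2⟩

lemma reach_trans {μ ν ρ : Crease m n → ℤ} (h1 : Reach m n μ ν) (h2 : Reach m n ν ρ) :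
    Reach m n μ ρ := by
  obtain ⟨L1, hm1, hf1, hv1⟩ := h1
  obtain ⟨L2, hm2, hf2, hv2⟩ := h2
  refine ⟨L1 ++ L2, ?_, ?_, ?_⟩
  · intro F hF
    rcases List.mem_append.1 hF with h | h
    · exact hm1 F h
    · exact hm2 F h
  · rw [flipSeq, List.foldl_append, ← flipSeq, ← flipSeq, hf1, hf2]
  · intro k hk
    rw [List.take_append, flipSeq, List.foldl_append, ← flipSeq, ← flipSeq]
    by_cases hkl : k ≤ L1.length
    · have : k - L1.length = 0 := by omega
      rw [this, List.take_zero, flipSeq_nil]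
      exact hv1 k hkl
    · have : L1.take k = L1 := List.take_of_length_le (by omega)
      rw [this, hf1]
      exact hv2 (k - L1.length) (by simp at hk; omega)

lemma faceFlip_faceFlip (μ : Crease m n → ℤ) (F : ℕ × ℕ) :
    faceFlip (faceFlip μ F) F = μ := by
  funext e
  simp only [faceFlip]
  split <;> simp

lemma flipSeq_reverse (μ : Crease m n → ℤ) (L : List (ℕ × ℕ)) :
    flipSeq (flipSeq μ L) L.reverse = μ := by
  induction L generalizing μ with
  | nil => rfl
  | cons F T ih =>
    have h1 : flipSeq μ (F :: T) = flipSeq (faceFlip μ F) T := rfl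
    rw [h1, List.reverse_cons, flipSeq, List.foldl_append]
    have h2 : List.foldl (fun ν F => faceFlip ν F) (flipSeq (faceFlip μ F) T) T.reverse
        = faceFlip μ F := ih (faceFlip μ F)
    rw [h2]
    show faceFlip (faceFlip μ F) F = μ
    exact faceFlip_faceFlip μ F

lemma reach_symm {μ ν : Crease m n → ℤ} (h : Reach m n μ ν) : Reach m n ν μ := by
  obtain ⟨L, hm1, hf1, hv1⟩ := h
  refine ⟨L.reverse, ?_, ?_, ?_⟩
  · intro F hF; exact hm1 F (List.mem_reverse.1 hF)
  · rw [← hf1]; exact flipSeq_reverse μ L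
  · intro k hk
    rw [List.length_reverse] at hk
    have hsplit : L = L.take (L.length - k) ++ L.drop (L.length - k) :=
      (List.take_append_drop _ L).symm
    have hrev : L.reverse.take k = (L.drop (L.length - k)).reverse := by
      conv_lhs => rw [hsplit]
      rw [List.reverse_append]
      exact List.take_left' (by rw [List.length_reverse, List.length_drop]; omega)
    rw [hrev, ← hf1]
    have hν : flipSeq μ L =
        flipSeq (flipSeq μ (L.take (L.length - k))) (L.drop (L.length - k)) := by
      conv_lhs => rw [hsplit]
      rw [flipSeq, List.foldl_append]; rfl
    rw [hν, flipSeq_reverse]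
    exact hv1 (L.length - k) (by omega)

lemma reach_single (h : ℕ × ℕ → ℤ) (hh : IsHF m n h) (i j : ℕ)
    (him : i < m) (hjn : j < n) (e : ℤ) (he : e = 1 ∨ e = -1)
    (hu : i + 1 < m → j < n → h (i+1, j) = h (i, j) + e)
    (hd : ∀ i', i' + 1 = i → i < m → j < n → h (i', j) = h (i, j) + e)
    (hr : i < m → j + 1 < n → h (i, j+1) = h (i, j) + e)
    (hl : ∀ j', j' + 1 = j → i < m → j < n → h (i, j') = h (i, j) + e) :
    Reach m n (toMV m n h) (toMV m n (Function.update h (i, j) (h (i, j) + 2*e))) := by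
  have hh' := flip_HF h hh i j e he hu hd hr hl
  have heq := flip_toMV (m := m) (n := n) h i j e hu hd hr hl
  refine ⟨[(i, j)], ?_, ?_, ?_⟩
  · intro F hF
    simp only [List.mem_singleton] at hF
    subst hF
    simp [Faces, Finset.mem_product, Finset.mem_range, him, hjn]
  · show faceFlip (toMV m n h) (i, j) = _
    rw [← heq]
  · intro k hk
    simp only [List.length_singleton] at hk
    interval_cases k
    · rw [List.take_zero, flipSeq_nil]
      exact ⟨toMV_isMV h hh, toMV_valid h hh⟩
    · have : ([(i, j)] : List (ℕ × ℕ)).take 1 = [(i, j)] := rfl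
      rw [this]
      show IsMV (faceFlip (toMV m n h) (i, j)) ∧ MiuraLocallyValid (faceFlip (toMV m n h) (i, j))
      rw [← heq]
      exact ⟨toMV_isMV _ hh', toMV_valid _ hh'⟩

end Aux4
section Aux5

variable {m n : ℕ}

lemma mem_faces {i j : ℕ} : ((i, j) : ℕ × ℕ) ∈ Faces m n ↔ i < m ∧ j < n := by
  simp [Faces, Finset.mem_product, Finset.mem_range]

lemma facesNE (hm : 1 ≤ m) (hn : 1 ≤ n) : (Faces m n).Nonempty :=
  ⟨(0, 0), mem_faces.2 ⟨hm, hn⟩⟩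

lemma phase1 (hm : 1 ≤ m) (hn : 1 ≤ n) : ∀ N : ℕ, ∀ h : ℕ × ℕ → ℤ, IsHF m n h →
    (∑ F ∈ Faces m n,
      (h F - ((Faces m n).image h).min' ((facesNE hm hn).image h)).toNat) ≤ N →
    ∃ (k : ℤ) (h' : ℕ × ℕ → ℤ), IsHF m n h' ∧ (∀ F ∈ Faces m n, h' F = k ∨ h' F = k + 1) ∧
      Reach m n (toMV m n h) (toMV m n h') := by
  intro N
  induction N with
  | zero =>
    intro h hh hsum
    set mn := ((Faces m n).image h).min' ((facesNE hm hn).image h) with hmn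
    refine ⟨mn, h, hh, ?_, reach_refl _ (toMV_isMV h hh) (toMV_valid h hh)⟩
    intro F hF
    have h1 : mn ≤ h F := Finset.min'_le _ _ (Finset.mem_image_of_mem h hF)
    have h2 : (h F - mn).toNat ≤ 0 :=
      le_trans (Finset.single_le_sum (f := fun G => (h G - mn).toNat)
        (fun G _ => Nat.zero_le _) hF) hsum
    omega
  | succ N ih =>
    intro h hh hsum
    set mn := ((Faces m n).image h).min' ((facesNE hm hn).image h) with hmn
    obtain ⟨F0, hF0mem, hF0max⟩ := Finset.exists_max_image (Faces m n) h (facesNE hm hn)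
    by_cases hsp : h F0 ≤ mn + 1
    · refine ⟨mn, h, hh, ?_, reach_refl _ (toMV_isMV h hh) (toMV_valid h hh)⟩
      intro F hF
      have h1 : mn ≤ h F := Finset.min'_le _ _ (Finset.mem_image_of_mem h hF)
      have h2 : h F ≤ h F0 := hF0max F hF
      omega
    · obtain ⟨i, j⟩ := F0
      obtain ⟨him, hjn⟩ := mem_faces.1 hF0mem
      have hu : i + 1 < m → j < n → h (i+1, j) = h (i, j) + (-1) := by
        intro hi hj
        have := hh.1 i j hi hj
        have := hF0max (i+1, j) (mem_faces.2 ⟨by omega, hj⟩)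
        omega
      have hd : ∀ i', i' + 1 = i → i < m → j < n → h (i', j) = h (i, j) + (-1) := by
        intro i' hi' _ _
        have hA := hh.1 i' j (by omega) hjn
        have hB := hF0max (i', j) (mem_faces.2 ⟨by omega, hjn⟩)
        have hC : ((i' + 1 : ℕ), j) = ((i : ℕ), j) := by rw [hi']
        rw [hC] at hA
        omega
      have hr : i < m → j + 1 < n → h (i, j+1) = h (i, j) + (-1) := by
        intro hi hj
        have := hh.2 i j hi hj
        have := hF0max (i, j+1) (mem_faces.2 ⟨hi, hj⟩)
        omega
      have hl : ∀ j', j' + 1 = j → i < m → j < n → h (i, j') = h (i, j) + (-1) := by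
        intro j' hj' _ _
        have hA := hh.2 i j' him (by omega)
        have hB := hF0max (i, j') (mem_faces.2 ⟨him, by omega⟩)
        have hC : ((i : ℕ), j' + 1) = ((i : ℕ), j) := by rw [hj']
        rw [hC] at hA
        omega
      set h' := Function.update h (i, j) (h (i, j) + 2 * (-1)) with hh'def
      have hh' : IsHF m n h' := flip_HF h hh i j (-1) (Or.inr rfl) hu hd hr hl
      have hreach : Reach m n (toMV m n h) (toMV m n h') :=
        reach_single h hh i j him hjn (-1) (Or.inr rfl) hu hd hr hl
      -- the minimum is unchanged
      have hlow : mn + 2 ≤ h (i, j) := by omega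
      obtain ⟨G, hGmem, hGval⟩ :
          ∃ G ∈ Faces m n, h G = mn := by
        have := Finset.min'_mem ((Faces m n).image h) ((facesNE hm hn).image h)
        rw [Finset.mem_image] at this
        obtain ⟨G, hG1, hG2⟩ := this
        exact ⟨G, hG1, hG2⟩
      have hGne : G ≠ (i, j) := by
        intro hc; rw [hc] at hGval; omega
      have hvals : ∀ F ∈ Faces m n, mn ≤ h' F := by
        intro F hF
        by_cases hFij : F = (i, j)
        · rw [hFij]
          simp only [hh'def, Function.update_self]
          omega
        · rw [hh'def, Function.update_of_ne hFij]
          exact Finset.min'_le _ _ (Finset.mem_image_of_mem h hF)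
      have hmin' : ((Faces m n).image h').min' ((facesNE hm hn).image h') = mn := by
        apply le_antisymm
        · apply Finset.min'_le
          rw [Finset.mem_image]
          exact ⟨G, hGmem, by rw [hh'def, Function.update_of_ne hGne, hGval]⟩
        · apply Finset.le_min'
          intro y hy
          rw [Finset.mem_image] at hy
          obtain ⟨F, hF1, hF2⟩ := hy
          rw [← hF2]
          exact hvals F hF1
      -- the measure has decreased
      have hsum' : (∑ F ∈ Faces m n,
          (h' F - ((Faces m n).image h').min' ((facesNE hm hn).image h')).toNat) ≤ N := by
        rw [hmin']
        have e1 : ∑ F ∈ (Faces m n).erase (i, j), (h' F - mn).toNat + (h' (i, j) - mn).toNat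
            = ∑ F ∈ Faces m n, (h' F - mn).toNat := Finset.sum_erase_add _ _ hF0mem
        have e2 : ∑ F ∈ (Faces m n).erase (i, j), (h F - mn).toNat + (h (i, j) - mn).toNat
            = ∑ F ∈ Faces m n, (h F - mn).toNat := Finset.sum_erase_add _ _ hF0mem
        have e3 : ∑ F ∈ (Faces m n).erase (i, j), (h' F - mn).toNat
            = ∑ F ∈ (Faces m n).erase (i, j), (h F - mn).toNat := by
          apply Finset.sum_congr rfl
          intro F hF
          rw [hh'def, Function.update_of_ne (Finset.ne_of_mem_erase hF)]
        have e4 : h' (i, j) = h (i, j) - 2 := by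
          simp only [hh'def, Function.update_self]; ring
        omega
      obtain ⟨k, h'', hh'', htl, hreach2⟩ := ih h' hh' hsum'
      exact ⟨k, h'', hh'', htl, reach_trans hreach hreach2⟩

end Aux5
section Aux6

variable {m n : ℕ}

lemma pattern (hm : 1 ≤ m) (hn : 1 ≤ n) (h : ℕ × ℕ → ℤ) (hh : IsHF m n h) (k : ℤ)
    (h2l : ∀ F ∈ Faces m n, h F = k ∨ h F = k + 1) :
    ∃ p : ℕ, p ≤ 1 ∧ ∀ i j : ℕ, i < m → j < n →
      h (i, j) = k + (((i + j + p) % 2 : ℕ) : ℤ) := by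
  have h00 : h (0, 0) = k ∨ h (0, 0) = k + 1 := h2l _ (mem_faces.2 ⟨hm, hn⟩)
  refine ⟨(h (0, 0) - k).toNat, by omega, ?_⟩
  have col0 : ∀ j : ℕ, j < n → h (0, j) = k + (((0 + j + (h (0,0) - k).toNat) % 2 : ℕ) : ℤ) := by
    intro j
    induction j with
    | zero => intro _; omega
    | succ j ih =>
      intro hj
      have hA := hh.2 0 j hm (by omega)
      have h1 := h2l (0, j) (mem_faces.2 ⟨hm, by omega⟩)
      have h2 := h2l (0, j+1) (mem_faces.2 ⟨hm, hj⟩)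
      have hB := ih (by omega)
      omega
  intro i
  induction i with
  | zero => intro j _ hj; exact col0 j hj
  | succ i ih =>
    intro j hi hj
    have hA := hh.1 i j (by omega) hj
    have h1 := h2l (i, j) (mem_faces.2 ⟨by omega, hj⟩)
    have h2 := h2l (i+1, j) (mem_faces.2 ⟨by omega, hj⟩)
    have hB := ih j (by omega) hj
    omega

lemma parity_HF (k : ℤ) (h : ℕ × ℕ → ℤ)
    (he : ∀ F : ℕ × ℕ, (F.1 + F.2) % 2 = 0 → h F = k + 1)
    (ho : ∀ F : ℕ × ℕ, (F.1 + F.2) % 2 = 1 → h F = k ∨ h F = k + 2) :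
    IsHF m n h := by
  constructor
  · intro a b _ _
    by_cases hp : (a + b) % 2 = 0
    · have h1 := he (a, b) hp
      have h2 := ho (a+1, b) (by simp; omega)
      omega
    · have h1 := ho (a, b) (by simp; omega)
      have h2 := he (a+1, b) (by simp; omega)
      omega
  · intro a b _ _
    by_cases hp : (a + b) % 2 = 0
    · have h1 := he (a, b) hp
      have h2 := ho (a, b+1) (by simp; omega)
      omega
    · have h1 := ho (a, b) (by simp; omega)
      have h2 := he (a, b+1) (by simp; omega)
      omega

lemma pass (k : ℤ) : ∀ L : List (ℕ × ℕ), L.Nodup →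
    (∀ F ∈ L, F ∈ Faces m n ∧ (F.1 + F.2) % 2 = 1) →
    ∀ h : ℕ × ℕ → ℤ,
    (∀ F : ℕ × ℕ, (F.1 + F.2) % 2 = 0 → h F = k + 1) →
    (∀ F : ℕ × ℕ, (F.1 + F.2) % 2 = 1 → h F = k ∨ h F = k + 2) →
    (∀ F ∈ L, h F = k) →
    ∃ h' : ℕ × ℕ → ℤ,
      (∀ F : ℕ × ℕ, (F.1 + F.2) % 2 = 0 → h' F = k + 1) ∧
      (∀ F ∈ L, h' F = k + 2) ∧ (∀ F, F ∉ L → h' F = h F) ∧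
      Reach m n (toMV m n h) (toMV m n h') := by
  intro L
  induction L with
  | nil =>
    intro _ _ h he ho _
    exact ⟨h, he, by simp, fun F _ => rfl,
      reach_refl _ (toMV_isMV h (parity_HF k h he ho)) (toMV_valid h (parity_HF k h he ho))⟩
  | cons F T ih =>
    intro hnd hsub h he ho hLk
    obtain ⟨hFT, hndT⟩ := List.nodup_cons.1 hnd
    obtain ⟨i, j⟩ := F
    obtain ⟨hFf, hFp⟩ := hsub (i, j) List.mem_cons_self
    obtain ⟨him, hjn⟩ := mem_faces.1 hFf
    simp only at hFp
    have hk : h (i, j) = k := hLk (i, j) List.mem_cons_self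
    have hu : i + 1 < m → j < n → h (i+1, j) = h (i, j) + 1 := by
      intro _ _
      have := he (i+1, j) (by simp; omega)
      omega
    have hd : ∀ i', i' + 1 = i → i < m → j < n → h (i', j) = h (i, j) + 1 := by
      intro i' hi' _ _
      have := he (i', j) (by simp; omega)
      omega
    have hr : i < m → j + 1 < n → h (i, j+1) = h (i, j) + 1 := by
      intro _ _
      have := he (i, j+1) (by simp; omega)
      omega
    have hl : ∀ j', j' + 1 = j → i < m → j < n → h (i, j') = h (i, j) + 1 := by
      intro j' hj' _ _
      have := he (i, j') (by simp; omega)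
      omega
    have hHF : IsHF m n h := parity_HF k h he ho
    set h1 := Function.update h (i, j) (h (i, j) + 2 * 1) with hh1
    have hstep : Reach m n (toMV m n h) (toMV m n h1) :=
      reach_single h hHF i j him hjn 1 (Or.inl rfl) hu hd hr hl
    have he1 : ∀ F : ℕ × ℕ, (F.1 + F.2) % 2 = 0 → h1 F = k + 1 := by
      intro F hFe
      have hne : F ≠ (i, j) := by
        intro hc; rw [hc] at hFe; simp only at hFe; omega
      rw [hh1, Function.update_of_ne hne]
      exact he F hFe
    have ho1 : ∀ F : ℕ × ℕ, (F.1 + F.2) % 2 = 1 → h1 F = k ∨ h1 F = k + 2 := by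
      intro F hFo
      by_cases hc : F = (i, j)
      · rw [hc, hh1, Function.update_self]; omega
      · rw [hh1, Function.update_of_ne hc]; exact ho F hFo
    have hT1 : ∀ F ∈ T, h1 F = k := by
      intro F hFmem
      have hne : F ≠ (i, j) := fun hc => hFT (hc ▸ hFmem)
      rw [hh1, Function.update_of_ne hne]
      exact hLk F (List.mem_cons_of_mem _ hFmem)
    obtain ⟨h', he', hL', hout', hreach'⟩ :=
      ih hndT (fun F hF => hsub F (List.mem_cons_of_mem _ hF)) h1 he1 ho1 hT1
    refine ⟨h', he', ?_, ?_, reach_trans hstep hreach'⟩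
    · intro F hFmem
      rcases List.mem_cons.1 hFmem with hc | hc
      · rw [hc]
        have : h' (i, j) = h1 (i, j) := hout' (i, j) (fun hmem => hFT hmem)
        rw [this, hh1, Function.update_self]
        omega
      · exact hL' F hc
    · intro F hFmem
      have h1' : F ∉ T := fun hc => hFmem (List.mem_cons_of_mem _ hc)
      have h2' : F ≠ (i, j) := fun hc => hFmem (hc ▸ (List.mem_cons_self (a := (i, j)) (l := T)))
      rw [hout' F h1', hh1, Function.update_of_ne h2']

def canonF : ℕ × ℕ → ℤ := fun F => (((F.1 + F.2) % 2 : ℕ) : ℤ)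

def patF (k : ℤ) (p : ℕ) : ℕ × ℕ → ℤ := fun F => k + (((F.1 + F.2 + p) % 2 : ℕ) : ℤ)

lemma phase2 (hm : 1 ≤ m) (hn : 1 ≤ n) (h : ℕ × ℕ → ℤ) (hh : IsHF m n h) (k : ℤ)
    (h2l : ∀ F ∈ Faces m n, h F = k ∨ h F = k + 1) :
    Reach m n (toMV m n h) (toMV m n canonF) := by
  obtain ⟨p, hp1, hpat⟩ := pattern hm hn h hh k h2l
  have heq : toMV m n h = toMV m n (patF k p) := by
    funext c
    cases c with
    | V a b pa pb =>
      have e1 := hpat a b (by omega) pb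
      have e2 := hpat (a+1) b pa pb
      simp only [toMV, patF, e1, e2]
    | H a b pa pb =>
      have e1 := hpat a b pa (by omega)
      have e2 := hpat a (b+1) pa pb
      simp only [toMV, patF, e1, e2]
  rw [heq]
  by_cases hpe : p % 2 = 0
  · have : toMV m n (patF k p) = toMV m n (canonF) := by
      funext c
      cases c with
      | V a b pa pb =>
        simp only [toMV, patF, canonF]
        split_ifs <;> omega
      | H a b pa pb =>
        simp only [toMV, patF, canonF]
        omega
    rw [this]
    have hcHF : IsHF m n (canonF) := by
      constructor
      · intro a b _ _; simp only [canonF]; omega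
      · intro a b _ _; simp only [canonF]; omega
    exact reach_refl _ (toMV_isMV _ hcHF) (toMV_valid _ hcHF)
  · -- p odd
    set L := ((Faces m n).filter (fun F => (F.1 + F.2) % 2 = 1)).toList with hL
    have hsub : ∀ F ∈ L, F ∈ Faces m n ∧ (F.1 + F.2) % 2 = 1 := by
      intro F hF
      rw [hL, Finset.mem_toList, Finset.mem_filter] at hF
      exact ⟨hF.1, by simpa using hF.2⟩
    have he : ∀ F : ℕ × ℕ, (F.1 + F.2) % 2 = 0 → patF k p F = k + 1 := by
      intro F hF; simp only [patF]; omega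
    have ho : ∀ F : ℕ × ℕ, (F.1 + F.2) % 2 = 1 → patF k p F = k ∨ patF k p F = k + 2 := by
      intro F hF; simp only [patF]; omega
    have hLk : ∀ F ∈ L, patF k p F = k := by
      intro F hF; exact (ho F (hsub F hF).2).resolve_right (by
        have := (hsub F hF).2
        simp only [patF]; omega)
    obtain ⟨h', he', hL', hout', hreach'⟩ :=
      pass k L (Finset.nodup_toList _) hsub (patF k p) he ho hLk
    have hfinal : toMV m n h' = toMV m n canonF := by
      funext c
      cases c with
      | V a b pa pb =>
        have hmemA : ((a, b) : ℕ × ℕ) ∈ Faces m n := mem_faces.2 ⟨by omega, pb⟩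
        have hmemB : ((a+1, b) : ℕ × ℕ) ∈ Faces m n := mem_faces.2 ⟨pa, pb⟩
        by_cases hpar : (a + b) % 2 = 0
        · have v1 : h' (a, b) = k + 1 := he' (a, b) hpar
          have v2 : h' (a+1, b) = k + 2 := by
            apply hL'
            rw [hL, Finset.mem_toList, Finset.mem_filter]
            exact ⟨hmemB, by simp; omega⟩
          simp only [toMV, canonF, v1, v2]
          split_ifs <;> omega
        · have v1 : h' (a, b) = k + 2 := by
            apply hL'
            rw [hL, Finset.mem_toList, Finset.mem_filter]
            exact ⟨hmemA, by simp; omega⟩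
          have v2 : h' (a+1, b) = k + 1 := he' (a+1, b) (by simp; omega)
          simp only [toMV, canonF, v1, v2]
          split_ifs <;> omega
      | H a b pa pb =>
        have hmemA : ((a, b) : ℕ × ℕ) ∈ Faces m n := mem_faces.2 ⟨pa, by omega⟩
        have hmemB : ((a, b+1) : ℕ × ℕ) ∈ Faces m n := mem_faces.2 ⟨pa, pb⟩
        by_cases hpar : (a + b) % 2 = 0
        · have v1 : h' (a, b) = k + 1 := he' (a, b) hpar
          have v2 : h' (a, b+1) = k + 2 := by
            apply hL'
            rw [hL, Finset.mem_toList, Finset.mem_filter]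
            exact ⟨hmemB, by simp; omega⟩
          simp only [toMV, canonF, v1, v2]
          omega
        · have v1 : h' (a, b) = k + 2 := by
            apply hL'
            rw [hL, Finset.mem_toList, Finset.mem_filter]
            exact ⟨hmemA, by simp; omega⟩
          have v2 : h' (a, b+1) = k + 1 := he' (a, b+1) (by simp; omega)
          simp only [toMV, canonF, v1, v2]
          omega
    rw [← hfinal]
    exact hreach'

end Aux6
/-- Any two Miura-locally-valid MV assignments of the Miura-ori are connected by a
finite sequence of single face flips all of whose intermediate MV assignments are
Miura-locally-valid: the origami flip graph of the Miura-ori is connected. -/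
theorem miura_flip_graph_connected (m n : ℕ) (hm : 1 ≤ m) (hn : 1 ≤ n)
    (μ₁ μ₂ : Crease m n → ℤ) (hmv₁ : IsMV μ₁) (hmv₂ : IsMV μ₂)
    (hval₁ : MiuraLocallyValid μ₁) (hval₂ : MiuraLocallyValid μ₂) :
    ∃ L : List (ℕ × ℕ), (∀ F ∈ L, F ∈ Faces m n) ∧
      flipSeq μ₁ L = μ₂ ∧
      ∀ k ≤ L.length,
        IsMV (flipSeq μ₁ (L.take k)) ∧ MiuraLocallyValid (flipSeq μ₁ (L.take k)) := by
  obtain ⟨h1, hh1, he1⟩ := exists_height μ₁ hmv₁ hval₁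
  obtain ⟨h2, hh2, he2⟩ := exists_height μ₂ hmv₂ hval₂
  obtain ⟨k1, h1', hh1', h2l1, hr1⟩ := phase1 hm hn _ h1 hh1 le_rfl
  obtain ⟨k2, h2', hh2', h2l2, hr2⟩ := phase1 hm hn _ h2 hh2 le_rfl
  have p1 := phase2 hm hn h1' hh1' k1 h2l1
  have p2 := phase2 hm hn h2' hh2' k2 h2l2
  have R1 : Reach m n μ₁ (toMV m n canonF) := by
    rw [← he1]; exact reach_trans hr1 p1
  have R2 : Reach m n μ₂ (toMV m n canonF) := by
    rw [← he2]; exact reach_trans hr2 p2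
  exact reach_trans R1 (reach_symm R2)
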